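/- A bipartite graph G is a forest (i.e., contains no cycle) if and only if G does not contain K_{2,2} as a bipartite minor. -/

import Mathlib

/-- A finite simple graph with vertex set a finite subset of `ℕ`. -/
structure NatGraph where
  verts : Finset ℕ
  Adj : ℕ → ℕ → Prop
  symm : ∀ ⦃x y⦄, Adj x y → Adj y x
  loopless : ∀ x, ¬ Adj x x
  mem_of_adj : ∀ ⦃x y⦄, Adj x y → x ∈ verts ∧ y ∈ verts

namespace NatGraph

/-- The underlying `SimpleGraph` on `ℕ`. -/
def toSimpleGraph (G : NatGraph) : SimpleGraph ℕ where
  Adj := G.Adj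
  symm := ⟨fun _ _ h => G.symm h⟩
  loopless := ⟨fun x h => G.loopless x h⟩

/-- A graph is bipartite if its vertices can be properly 2-colored. -/
def IsBipartite (G : NatGraph) : Prop :=
  ∃ c : ℕ → Bool, ∀ ⦃x y⦄, G.Adj x y → c x ≠ c y

/-- Delete a set of vertices (and all incident edges). -/
def deleteVerts (G : NatGraph) (S : Finset ℕ) : NatGraph where
  verts := G.verts \ S
  Adj x y := G.Adj x y ∧ x ∉ S ∧ y ∉ S
  symm := fun _ _ h => ⟨G.symm h.1, h.2.2, h.2.1⟩
  loopless := fun x h => G.loopless x h.1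
  mem_of_adj := fun x y h => by
    obtain ⟨hx, hy⟩ := G.mem_of_adj h.1
    exact ⟨Finset.mem_sdiff.2 ⟨hx, h.2.1⟩, Finset.mem_sdiff.2 ⟨hy, h.2.2⟩⟩

/-- Delete a single vertex. -/
def deleteVert (G : NatGraph) (x : ℕ) : NatGraph := G.deleteVerts {x}

/-- Delete a single edge. -/
def deleteEdge (G : NatGraph) (x y : ℕ) : NatGraph where
  verts := G.verts
  Adj a b := G.Adj a b ∧ ¬((a = x ∧ b = y) ∨ (a = y ∧ b = x))
  symm := fun _ _ h => ⟨G.symm h.1, fun hc => h.2 (by tauto)⟩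
  loopless := fun a h => G.loopless a h.1
  mem_of_adj := fun _ _ h => G.mem_of_adj h.1

/-- Contraction of a vertex `u` with a vertex `v`: identify `u` with `v`
(deleting one copy of each resulting double edge). -/
def contract (G : NatGraph) (u v : ℕ) : NatGraph where
  verts := G.verts.erase u
  Adj a b := a ≠ b ∧ a ∈ G.verts.erase u ∧ b ∈ G.verts.erase u ∧
    ∃ p q, G.Adj p q ∧ (if p = u then v else p) = a ∧ (if q = u then v else q) = b
  symm := fun a b h => ⟨h.1.symm, h.2.2.1, h.2.1, by
    obtain ⟨p, q, h1, h2, h3⟩ := h.2.2.2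
    exact ⟨q, p, G.symm h1, h3, h2⟩⟩
  loopless := fun a h => h.1 rfl
  mem_of_adj := fun _ _ h => ⟨h.2.1, h.2.2.1⟩

/-- The number of connected components of a graph (on its vertex set). -/
noncomputable def numComponents (G : NatGraph) : ℕ :=
  Nat.card (SimpleGraph.induce (G.verts : Set ℕ) G.toSimpleGraph).ConnectedComponent

/-- A cycle is peripheral if it is induced (no two nonadjacent vertices of the
cycle are joined by an edge of `G`) and non-separating (deleting its vertices
does not increase the number of connected components). -/
def Peripheral (G : NatGraph) {a : ℕ} (C : G.toSimpleGraph.Walk a a) : Prop :=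
  C.IsCycle ∧
  (∀ x ∈ C.support, ∀ y ∈ C.support, G.Adj x y → s(x, y) ∈ C.edges) ∧
  (G.deleteVerts C.support.toFinset).numComponents ≤ G.numComponents

/-- A contraction of `u` with `v` is admissible if they have a common neighbor `w`
such that the path `(u, w, v)` is part of a peripheral cycle. -/
def AdmissibleContraction (G : NatGraph) (u v : ℕ) : Prop :=
  u ≠ v ∧ ∃ (w a : ℕ) (C : G.toSimpleGraph.Walk a a),
    G.Adj u w ∧ G.Adj w v ∧ G.Peripheral C ∧ s(u, w) ∈ C.edges ∧ s(w, v) ∈ C.edges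

/-- One step in the formation of a bipartite minor: deletion of a vertex,
deletion of an edge, or an admissible contraction. -/
inductive MinorStep : NatGraph → NatGraph → Prop
  | deleteVert (G : NatGraph) (x : ℕ) : MinorStep (G.deleteVert x) G
  | deleteEdge (G : NatGraph) (x y : ℕ) (h : G.Adj x y) : MinorStep (G.deleteEdge x y) G
  | contract (G : NatGraph) (u v : ℕ) (h : G.AdmissibleContraction u v) :
      MinorStep (G.contract u v) G

/-- `H` is a bipartite minor of `G` if it is obtained from `G` by a finite sequence
of vertex deletions, edge deletions, and admissible contractions. -/
def IsBipMinorOf (H G : NatGraph) : Prop := Relation.ReflTransGen MinorStep H G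

/-- `H` is a subgraph of `G`. -/
def IsSubgraphOf (H G : NatGraph) : Prop :=
  H.verts ⊆ G.verts ∧ ∀ ⦃x y⦄, H.Adj x y → G.Adj x y

/-- `G` is (a copy of) the complete bipartite graph `K_{m,n}`. -/
def IsCompleteBipartiteOn (G : NatGraph) (m n : ℕ) : Prop :=
  ∃ S T : Finset ℕ, S.card = m ∧ T.card = n ∧ Disjoint S T ∧ G.verts = S ∪ T ∧
    ∀ x y, G.Adj x y ↔ ((x ∈ S ∧ y ∈ T) ∨ (x ∈ T ∧ y ∈ S))

/-- `G` is (a copy of) the complete graph `K_n`. -/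
def IsCompleteOn (G : NatGraph) (n : ℕ) : Prop :=
  ∃ S : Finset ℕ, S.card = n ∧ G.verts = S ∧
    ∀ x y, G.Adj x y ↔ (x ∈ S ∧ y ∈ S ∧ x ≠ y)

/-- Witness data exhibiting `H` as a subdivision of `K` : for each edge `xy` of `K`,
`P x y` is the list of interior vertices of the path of `H` replacing `xy`. -/
structure IsSubdivDataOf (K H : NatGraph) (P : ℕ → ℕ → List ℕ) : Prop where
  verts_subset : K.verts ⊆ H.verts
  rev : ∀ ⦃x y⦄, K.Adj x y → P y x = (P x y).reverse
  interior_new : ∀ ⦃x y⦄, K.Adj x y → ∀ z ∈ P x y, z ∉ K.verts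
  nodup : ∀ ⦃x y⦄, K.Adj x y → (x :: (P x y ++ [y])).Nodup
  disj : ∀ ⦃x y a b⦄, K.Adj x y → K.Adj a b → s(x, y) ≠ s(a, b) →
    ∀ z ∈ P x y, z ∉ P a b
  verts_eq : (H.verts : Set ℕ) = ↑K.verts ∪ {z | ∃ x y, K.Adj x y ∧ z ∈ P x y}
  adj_iff : ∀ a b, H.Adj a b ↔ ∃ x y, K.Adj x y ∧ [a, b] <:+: (x :: (P x y ++ [y]))

/-- `H` is a subdivision of `K`. -/
def IsSubdivisionOf (H K : NatGraph) : Prop := ∃ P, IsSubdivDataOf K H P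

/-- `G` contains `K_{3,3}` as a bipartite minor. -/
def HasK33BipMinor (G : NatGraph) : Prop :=
  ∃ H : NatGraph, H.IsCompleteBipartiteOn 3 3 ∧ H.IsBipMinorOf G

end NatGraph

namespace NatGraph

open SimpleGraph Walk

/-! ### Basic helpers -/

lemma ext' {G H : NatGraph} (hv : G.verts = H.verts)
    (ha : ∀ x y, G.Adj x y ↔ H.Adj x y) : G = H := by
  have hA : G.Adj = H.Adj := funext fun x => funext fun y => propext (ha x y)
  cases G; cases H
  dsimp only at hv hA
  subst hv; subst hA; rfl

lemma walk_even_iff {G : NatGraph} {c : ℕ → Bool}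
    (hc : ∀ ⦃x y⦄, G.Adj x y → c x ≠ c y) :
    ∀ {u v : ℕ} (p : G.toSimpleGraph.Walk u v), (Even p.length ↔ c u = c v) := by
  intro u v p
  induction p with
  | nil => simp
  | @cons u w v h q ih =>
    have hne : c u ≠ c w := hc h
    rw [Walk.length_cons, Nat.even_add_one, ih]
    cases hcu : c u <;> cases hcw : c w <;> cases hcv : c v <;> simp_all

/-! ### Forward direction: acyclic graphs have no `K₂,₂` minor -/

lemma subgraph_acyclic {H G : NatGraph} (hsub : ∀ ⦃x y⦄, H.Adj x y → G.Adj x y)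
    (hac : G.toSimpleGraph.IsAcyclic) : H.toSimpleGraph.IsAcyclic := by
  intro v p hp
  have hedges : ∀ e, e ∈ p.edges → e ∈ G.toSimpleGraph.edgeSet := by
    intro e he
    induction e using Sym2.ind with
    | _ x y => exact hsub (Walk.adj_of_mem_edges p he)
  exact hac (p.transfer G.toSimpleGraph hedges) (hp.transfer hedges)

lemma step_acyclic {H G : NatGraph} (h : MinorStep H G)
    (hac : G.toSimpleGraph.IsAcyclic) : H.toSimpleGraph.IsAcyclic := by
  cases h with
  | deleteVert G x => exact subgraph_acyclic (fun a b hab => hab.1) hac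
  | deleteEdge G x y hxy => exact subgraph_acyclic (fun a b hab => hab.1) hac
  | contract G u v hadm =>
    obtain ⟨_, w, a, C, _, _, hper, _, _⟩ := hadm
    exact absurd hper.1 (hac C)

lemma minor_acyclic {H G : NatGraph} (hM : H.IsBipMinorOf G)
    (hac : G.toSimpleGraph.IsAcyclic) : H.toSimpleGraph.IsAcyclic := by
  induction hM using Relation.ReflTransGen.head_induction_on with
  | refl => exact hac
  | head hstep _ ih => exact step_acyclic hstep ih

lemma k22_cycle {H : NatGraph} (hK : H.IsCompleteBipartiteOn 2 2) :
    ¬ H.toSimpleGraph.IsAcyclic := by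
  obtain ⟨S, T, hS, hT, hdisj, hverts, hadj⟩ := hK
  obtain ⟨p₁, p₂, hp, rfl⟩ := Finset.card_eq_two.1 hS
  obtain ⟨q₁, q₂, hq, rfl⟩ := Finset.card_eq_two.1 hT
  have hd : ∀ x ∈ ({p₁, p₂} : Finset ℕ), ∀ y ∈ ({q₁, q₂} : Finset ℕ), x ≠ y := by
    intro x hx y hy hxy
    exact Finset.disjoint_left.1 hdisj hx (hxy ▸ hy)
  have h11 : p₁ ≠ q₁ := hd _ (by simp) _ (by simp)
  have h12 : p₁ ≠ q₂ := hd _ (by simp) _ (by simp)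
  have h21 : p₂ ≠ q₁ := hd _ (by simp) _ (by simp)
  have h22 : p₂ ≠ q₂ := hd _ (by simp) _ (by simp)
  have a1 : H.toSimpleGraph.Adj p₁ q₁ := (hadj _ _).2 (Or.inl ⟨by simp, by simp⟩)
  have a2 : H.toSimpleGraph.Adj q₁ p₂ := (hadj _ _).2 (Or.inr ⟨by simp, by simp⟩)
  have a3 : H.toSimpleGraph.Adj p₂ q₂ := (hadj _ _).2 (Or.inl ⟨by simp, by simp⟩)
  have a4 : H.toSimpleGraph.Adj q₂ p₁ := (hadj _ _).2 (Or.inr ⟨by simp, by simp⟩)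
  intro hac
  refine hac (Walk.cons a1 (Walk.cons a2 (Walk.cons a3 (Walk.cons a4 Walk.nil)))) ?_
  rw [Walk.isCycle_def]
  refine ⟨?_, by simp, ?_⟩
  · rw [Walk.isTrail_def]
    simp only [Walk.edges_cons, Walk.edges_nil, List.nodup_cons, List.mem_cons,
      List.not_mem_nil, or_false, List.nodup_nil, and_true, Sym2.eq_iff, not_or]
    refine ⟨⟨?_, ?_, ?_⟩, ⟨?_, ?_⟩, ?_⟩ <;> tauto
  · simp only [Walk.support_cons, Walk.support_nil, List.tail_cons, List.nodup_cons,
      List.mem_cons, List.mem_singleton, List.not_mem_nil, or_false, List.nodup_nil,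
      and_true, not_or]
    refine ⟨⟨?_, ?_, ?_⟩, ⟨?_, ?_⟩, ?_⟩ <;> tauto

/-! ### Walk mapping machinery -/

/-- Replace `a` by `b`. -/
def sw (a b z : ℕ) : ℕ := if z = a then b else z

lemma sw_ne_a {a b z : ℕ} (hb : b ≠ a) : sw a b z ≠ a := by
  unfold sw; split <;> simp_all

lemma sw_eq_cases {a b z z' : ℕ} (h : sw a b z = sw a b z') :
    z = z' ∨ (z = a ∧ z' = b) ∨ (z = b ∧ z' = a) := by
  unfold sw at h; split at h <;> split at h <;> simp_all

def mapWalk {V W : Type} {G : SimpleGraph V} {H : SimpleGraph W} (f : V → W) :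
    ∀ {x y : V} (q : G.Walk x y),
      (∀ e ∈ q.edges, (Sym2.map f e) ∈ H.edgeSet) → H.Walk (f x) (f y)
  | _, _, .nil, _ => .nil
  | _, _, .cons h q, hq => .cons
      (by
        have := hq _ (by rw [Walk.edges_cons]; exact List.mem_cons_self)
        rwa [Sym2.map_pair_eq, SimpleGraph.mem_edgeSet] at this)
      (mapWalk f q (fun e he => hq e (by rw [Walk.edges_cons]; exact List.mem_cons_of_mem _ he)))

lemma mapWalk_support {V W : Type} {G : SimpleGraph V} {H : SimpleGraph W} (f : V → W) :
    ∀ {x y : V} (q : G.Walk x y) (hq), (mapWalk (H := H) f q hq).support = q.support.map f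
  | _, _, .nil, _ => rfl
  | _, _, .cons h q, hq => by
    simp [mapWalk, mapWalk_support f q]

lemma mapWalk_edges {V W : Type} {G : SimpleGraph V} {H : SimpleGraph W} (f : V → W) :
    ∀ {x y : V} (q : G.Walk x y) (hq),
      (mapWalk (H := H) f q hq).edges = q.edges.map (Sym2.map f)
  | _, _, .nil, _ => rfl
  | _, _, .cons h q, hq => by
    simp [mapWalk, mapWalk_edges f q, Sym2.map_pair_eq]

lemma mapWalk_length {V W : Type} {G : SimpleGraph V} {H : SimpleGraph W} (f : V → W) :
    ∀ {x y : V} (q : G.Walk x y) (hq), (mapWalk (H := H) f q hq).length = q.length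
  | _, _, .nil, _ => rfl
  | _, _, .cons h q, hq => by
    simp [mapWalk, mapWalk_length f q]

lemma edge_at_start {V : Type} {G : SimpleGraph V} {u w v x : V} (h : G.Adj u w)
    (q : G.Walk w v) (hnd : (Walk.cons h q).support.Nodup)
    (hx : s(u, x) ∈ (Walk.cons h q).edges) : x = w := by
  rw [Walk.support_cons, List.nodup_cons] at hnd
  rw [Walk.edges_cons, List.mem_cons] at hx
  rcases hx with hx | hx
  · rcases Sym2.eq_iff.1 hx with ⟨-, h2⟩ | ⟨h1, h2⟩
    · exact h2
    · exact absurd h1 h.ne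
  · exact absurd (Walk.fst_mem_support_of_mem_edges q hx) hnd.1

lemma closed_nil {V : Type} {G : SimpleGraph V} {a : V} (p : G.Walk a a)
    (h : p.support.Nodup) : p.length = 0 := by
  cases p with
  | nil => rfl
  | cons hadj q =>
    rw [Walk.support_cons, List.nodup_cons] at h
    exact absurd q.end_mem_support h.1

/-! ### Vertex deletion as a minor -/

lemma deleteVerts_empty (G : NatGraph) : G.deleteVerts ∅ = G :=
  ext' (by simp [deleteVerts]) (fun x y => by simp [deleteVerts])

lemma deleteVerts_insert (G : NatGraph) (x : ℕ) (S : Finset ℕ) :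
    G.deleteVerts (insert x S) = (G.deleteVerts S).deleteVert x := by
  refine ext' ?_ ?_
  · ext z; simp [deleteVerts, deleteVert]; tauto
  · intro p q; simp [deleteVerts, deleteVert]; tauto

lemma deleteVerts_minor (G : NatGraph) (S : Finset ℕ) :
    (G.deleteVerts S).IsBipMinorOf G := by
  classical
  induction S using Finset.induction_on with
  | empty => rw [deleteVerts_empty]; exact Relation.ReflTransGen.refl
  | @insert x S hx ih =>
    rw [deleteVerts_insert]
    exact Relation.ReflTransGen.head (MinorStep.deleteVert _ x) ih

/-! ### Pure cycles -/

def IsPureCycle (G : NatGraph) {a : ℕ} (C : G.toSimpleGraph.Walk a a) : Prop :=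
  C.IsCycle ∧ G.verts = C.support.toFinset ∧ ∀ x y, G.Adj x y → s(x, y) ∈ C.edges

lemma numComponents_of_empty (G : NatGraph) (h : G.verts = ∅) : G.numComponents = 0 := by
  unfold numComponents
  rw [h, Finset.coe_empty]
  haveI : IsEmpty ((∅ : Set ℕ) : Type) := ⟨fun x => x.2⟩
  haveI : IsEmpty (SimpleGraph.induce (∅ : Set ℕ) G.toSimpleGraph).ConnectedComponent :=
    ⟨fun c => SimpleGraph.ConnectedComponent.ind (fun v => isEmptyElim v) c⟩
  exact Nat.card_of_isEmpty

lemma mem_support_cases (G : NatGraph) :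
    ∀ {u v : ℕ} (p : G.toSimpleGraph.Walk u v), ∀ x ∈ p.support, x = v ∨ x ∈ G.verts := by
  intro u v p
  induction p with
  | nil => intro x hx; rw [Walk.support_nil, List.mem_singleton] at hx; exact Or.inl hx
  | cons hadj q ih =>
    intro x hx
    rw [Walk.support_cons, List.mem_cons] at hx
    rcases hx with rfl | hx
    · exact Or.inr (G.mem_of_adj hadj).1
    · exact ih x hx

lemma phase1 (G : NatGraph) {a : ℕ} (C : G.toSimpleGraph.Walk a a) (hC : C.IsCycle) :
    ∃ (G₁ : NatGraph) (C₁ : G₁.toSimpleGraph.Walk a a), C₁.IsCycle ∧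
      G₁.verts = C₁.support.toFinset ∧ C₁.length = C.length ∧ G₁.IsBipMinorOf G := by
  have hsupp : ∀ x ∈ C.support, x ∈ G.verts := by
    intro x hx
    rcases mem_support_cases G C x hx with rfl | h
    · cases C with
      | nil => exact absurd hC.three_le_length (by simp)
      | cons h1 C1 => exact (G.mem_of_adj h1).1
    · exact h
  set S : Finset ℕ := G.verts \ C.support.toFinset with hS
  have hedges : ∀ e, e ∈ C.edges → e ∈ (G.deleteVerts S).toSimpleGraph.edgeSet := by
    intro e he
    induction e using Sym2.ind with
    | _ x y =>
      rw [SimpleGraph.mem_edgeSet]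
      have hx := Walk.fst_mem_support_of_mem_edges C he
      have hy := Walk.snd_mem_support_of_mem_edges C he
      refine ⟨Walk.adj_of_mem_edges C he, ?_, ?_⟩
      · simp [hS, Finset.mem_sdiff, List.mem_toFinset, hx]
      · simp [hS, Finset.mem_sdiff, List.mem_toFinset, hy]
  refine ⟨G.deleteVerts S, C.transfer _ hedges, hC.transfer hedges, ?_,
    Walk.length_transfer _ _, deleteVerts_minor G S⟩
  rw [Walk.support_transfer]
  show G.verts \ S = _
  rw [hS, Finset.sdiff_sdiff_self_left,
    Finset.inter_eq_right.2 (fun x hx => hsupp x (List.mem_toFinset.1 hx))]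

lemma phase2 : ∀ (F : Finset (Sym2 ℕ)) (G₁ : NatGraph) (a : ℕ)
    (C₁ : G₁.toSimpleGraph.Walk a a),
    C₁.IsCycle → G₁.verts = C₁.support.toFinset →
    (∀ x y, G₁.Adj x y → s(x, y) ∈ C₁.edges ∨ s(x, y) ∈ F) →
    ∃ (G₂ : NatGraph) (C₂ : G₂.toSimpleGraph.Walk a a),
      G₂.IsPureCycle C₂ ∧ C₂.length = C₁.length ∧ G₂.IsBipMinorOf G₁ := by
  classical
  intro F
  induction F using Finset.induction_on with
  | empty =>
    intro G₁ a C₁ hc hv h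
    exact ⟨G₁, C₁, ⟨hc, hv, fun x y hxy => (h x y hxy).resolve_right (by simp)⟩, rfl,
      Relation.ReflTransGen.refl⟩
  | @insert e F he ih =>
    intro G₁ a C₁ hc hv h
    by_cases hex : ∃ x y, G₁.Adj x y ∧ s(x, y) = e ∧ e ∉ C₁.edges
    · obtain ⟨x, y, hxy, hsx, hnc⟩ := hex
      have hedges : ∀ e', e' ∈ C₁.edges → e' ∈ (G₁.deleteEdge x y).toSimpleGraph.edgeSet := by
        intro e' he'
        induction e' using Sym2.ind with
        | _ p q =>
          rw [SimpleGraph.mem_edgeSet]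
          refine ⟨Walk.adj_of_mem_edges C₁ he', ?_⟩
          rintro (⟨rfl, rfl⟩ | ⟨rfl, rfl⟩)
          · exact hnc (hsx ▸ he')
          · apply hnc; rw [← hsx, Sym2.eq_swap]; exact he'
      obtain ⟨G₂, C₂, hp, hl, hm⟩ := ih (G₁.deleteEdge x y) a (C₁.transfer _ hedges)
        (hc.transfer hedges)
        (by rw [Walk.support_transfer]; exact hv)
        (by
          intro p q hpq
          rw [Walk.edges_transfer]
          rcases h p q hpq.1 with h1 | h1
          · exact Or.inl h1
          · rcases Finset.mem_insert.1 h1 with h2 | h2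
            · exfalso
              apply hpq.2
              have h3 : s(p, q) = s(x, y) := h2.trans hsx.symm
              rcases Sym2.eq_iff.1 h3 with ⟨rfl, rfl⟩ | ⟨rfl, rfl⟩
              · exact Or.inl ⟨rfl, rfl⟩
              · exact Or.inr ⟨rfl, rfl⟩
            · exact Or.inr h2)
      exact ⟨G₂, C₂, hp, by rw [hl, Walk.length_transfer],
        hm.tail (MinorStep.deleteEdge G₁ x y hxy)⟩
    · push_neg at hex
      refine ih G₁ a C₁ hc hv (fun p q hpq => ?_)
      rcases h p q hpq with h1 | h1
      · exact Or.inl h1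
      · rcases Finset.mem_insert.1 h1 with h2 | h2
        · rw [h2]; exact Or.inl (hex p q hpq h2)
        · exact Or.inr h2

lemma phase3 : ∀ (n : ℕ) (G : NatGraph) (a : ℕ) (C : G.toSimpleGraph.Walk a a),
    G.IsPureCycle C → C.length = n → Even n →
    ∃ H : NatGraph, H.IsCompleteBipartiteOn 2 2 ∧ H.IsBipMinorOf G := by
  intro n
  induction n using Nat.strong_induction_on with
  | _ n ih =>
  intro G a C hpc hlen heven
  obtain ⟨hC, hverts, hadj⟩ := hpc
  have h3 : 3 ≤ C.length := hC.three_le_length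
  have hcase : n = 4 ∨ 6 ≤ n := by
    obtain ⟨k, hk⟩ := heven; omega
  rcases hcase with rfl | h6
  · -- base case : a 4-cycle is K₂,₂
    clear ih heven h3
    cases C with
    | nil => rw [Walk.length_nil] at hlen; omega
    | cons h1 C1 =>
    rename_i v1
    cases C1 with
    | nil => rw [Walk.length_cons, Walk.length_nil] at hlen; omega
    | cons h2 C2 =>
    rename_i v2
    cases C2 with
    | nil => simp only [Walk.length_cons, Walk.length_nil] at hlen; omega
    | cons h3' C3 =>
    rename_i v3
    cases C3 with
    | nil => simp only [Walk.length_cons, Walk.length_nil] at hlen; omega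
    | cons h4 C4 =>
    rename_i v4
    cases C4 with
    | cons h5 C5 => simp only [Walk.length_cons] at hlen; omega
    | nil =>
    have hnd := ((Walk.isCycle_def _).1 hC).2.2
    simp only [Walk.support_cons, Walk.support_nil, List.tail_cons, List.nodup_cons,
      List.mem_cons, List.mem_singleton, List.not_mem_nil, or_false, List.nodup_nil,
      and_true, not_or] at hnd
    obtain ⟨⟨h12, h13, h1a⟩, ⟨h23, h2a⟩, h3a, -⟩ := hnd
    have hav1 : a ≠ v1 := h1.ne
    refine ⟨G, ⟨{a, v2}, {v1, v3}, ?_, ?_, ?_, ?_, ?_⟩, Relation.ReflTransGen.refl⟩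
    · rw [Finset.card_insert_of_notMem (by simp only [Finset.mem_singleton]; exact fun h => h2a h.symm), Finset.card_singleton]
    · rw [Finset.card_insert_of_notMem (by simp only [Finset.mem_singleton]; exact h13), Finset.card_singleton]
    · rw [Finset.disjoint_left]
      intro z hz hz'
      simp only [Finset.mem_insert, Finset.mem_singleton] at hz hz'
      rcases hz with rfl | rfl <;> rcases hz' with rfl | rfl <;> simp_all
    · rw [hverts]
      ext z
      simp only [List.mem_toFinset, Walk.support_cons, Walk.support_nil, List.mem_cons,
        List.mem_singleton, Finset.mem_union, Finset.mem_insert, Finset.mem_singleton]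
      tauto
    · intro x y
      constructor
      · intro hxy
        have hm := hadj x y hxy
        simp only [Walk.edges_cons, Walk.edges_nil, List.mem_cons, List.not_mem_nil,
          or_false] at hm
        simp only [Finset.mem_insert, Finset.mem_singleton]
        rcases hm with hm | hm | hm | hm <;>
          rcases Sym2.eq_iff.1 hm with ⟨rfl, rfl⟩ | ⟨rfl, rfl⟩ <;> tauto
      · intro hxy
        simp only [Finset.mem_insert, Finset.mem_singleton] at hxy
        have e1 : G.Adj a v1 := h1
        have e2 : G.Adj v1 v2 := h2
        have e3 : G.Adj v2 v3 := h3'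
        have e4 : G.Adj v3 a := h4
        rcases hxy with ⟨rfl | rfl, rfl | rfl⟩ | ⟨rfl | rfl, rfl | rfl⟩ <;>
          first
            | exact e1 | exact e2 | exact e3 | exact e4
            | exact G.symm e1 | exact G.symm e2 | exact G.symm e3 | exact G.symm e4
  · -- inductive step : contract a with v2 and delete the pendant v1
    cases C with
    | nil => rw [Walk.length_nil] at hlen; omega
    | cons h1 C1 =>
    rename_i v1
    cases C1 with
    | nil => rw [Walk.length_cons, Walk.length_nil] at hlen; omega
    | cons h2 C2 =>
    rename_i v2
    have hnd := ((Walk.isCycle_def _).1 hC).2.2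
    rw [Walk.support_cons, Walk.support_cons, List.tail_cons, List.nodup_cons] at hnd
    obtain ⟨hv1, hndC2⟩ := hnd
    have hav1 : a ≠ v1 := h1.ne
    have hv1v2 : v1 ≠ v2 := h2.ne
    have hv2a : v2 ≠ a := by
      intro hh
      subst hh
      have := closed_nil C2 hndC2
      simp only [Walk.length_cons] at hlen
      omega
    cases C2 with
    | nil => simp only [Walk.length_cons, Walk.length_nil] at hlen; omega
    | cons h3e C3 =>
    rename_i v3
    rw [Walk.support_cons, List.nodup_cons] at hndC2
    obtain ⟨hv2C3, hndC3⟩ := hndC2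
    have hv2v3 : v2 ≠ v3 := h3e.ne
    have hlen' : C3.length + 3 = n := by
      simp only [Walk.length_cons] at hlen; omega
    have hav3 : a ≠ v3 := by
      intro hh
      subst hh
      have := closed_nil C3 hndC3
      omega
    have hv1C3 : v1 ∉ C3.support := by
      intro hh
      exact hv1 (by rw [Walk.support_cons]; exact List.mem_cons_of_mem _ hh)
    have hmemC : ∀ {e}, e ∈ (Walk.cons h3e C3).edges →
        e ∈ (Walk.cons h1 (Walk.cons h2 (Walk.cons h3e C3))).edges := by
      intro e he
      rw [Walk.edges_cons, Walk.edges_cons]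
      exact List.mem_cons_of_mem _ (List.mem_cons_of_mem _ he)
    -- key facts about chords
    have key1 : ¬ G.Adj a v2 := by
      intro had
      have hm := hadj _ _ had
      simp only [Walk.edges_cons, List.mem_cons] at hm
      rcases hm with hm | hm | hm | hm
      · rcases Sym2.eq_iff.1 hm with ⟨-, h'⟩ | ⟨h', -⟩
        · exact hv1v2 h'.symm
        · exact hav1 h'
      · rcases Sym2.eq_iff.1 hm with ⟨h', -⟩ | ⟨h', h''⟩
        · exact hav1 h'
        · exact hv1v2 h''.symm
      · rcases Sym2.eq_iff.1 hm with ⟨h', -⟩ | ⟨h', -⟩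
        · exact hv2a h'.symm
        · exact hav3 h'
      · exact hv2C3 (Walk.snd_mem_support_of_mem_edges C3 hm)
    have key2 : s(a, v3) ∉ C3.edges := by
      intro hm
      cases C3 with
      | nil => simp only [Walk.edges_nil, List.not_mem_nil] at hm
      | cons h4 C4 =>
        rename_i v4
        have h' : a = v4 := by
          refine edge_at_start h4 C4 hndC3 ?_
          rw [Sym2.eq_swap] at hm
          exact hm
        subst h'
        rw [Walk.support_cons, List.nodup_cons] at hndC3
        have := closed_nil C4 hndC3.2
        simp only [Walk.length_cons] at hlen'
        omega
    -- the contracted graph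
    set G' : NatGraph := (G.contract a v2).deleteVert v1 with hG'
    have hG'adj : ∀ ⦃p q : ℕ⦄, s(p, q) ∈ (Walk.cons h3e C3).edges →
        G'.Adj (sw a v2 p) (sw a v2 q) := by
      intro p q he
      have hpq : G.Adj p q := Walk.adj_of_mem_edges _ (hmemC he)
      have hps : p ∈ (Walk.cons h3e C3).support := Walk.fst_mem_support_of_mem_edges _ he
      have hqs : q ∈ (Walk.cons h3e C3).support := Walk.snd_mem_support_of_mem_edges _ he
      have hsupmem : ∀ z ∈ (Walk.cons h3e C3).support, sw a v2 z ∈ (Walk.cons h3e C3).support := by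
        intro z hz
        by_cases hza : z = a
        · subst hza
          simp only [sw, if_pos rfl]
          exact Walk.start_mem_support _
        · simp only [sw, if_neg hza]
          exact hz
      have hvme : ∀ z ∈ (Walk.cons h3e C3).support, z ∈ G.verts := by
        intro z hz
        rw [hverts, List.mem_toFinset, Walk.support_cons, Walk.support_cons]
        exact List.mem_cons_of_mem _ (List.mem_cons_of_mem _ hz)
      have hnov1 : ∀ z ∈ (Walk.cons h3e C3).support, sw a v2 z ∉ ({v1} : Finset ℕ) := by
        intro z hz
        rw [Finset.mem_singleton]
        intro h'
        by_cases hza : z = a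
        · subst hza; simp only [sw, if_pos rfl] at h'; exact hv1v2 h'.symm
        · simp only [sw, if_neg hza] at h'; subst h'; exact hv1 hz
      refine ⟨⟨?_, ?_, ?_, p, q, hpq, rfl, rfl⟩, hnov1 _ hps, hnov1 _ hqs⟩
      · intro h'
        rcases sw_eq_cases h' with h'' | ⟨rfl, rfl⟩ | ⟨rfl, rfl⟩
        · subst h''; exact G.loopless _ hpq
        · exact key1 hpq
        · exact key1 (G.symm hpq)
      · exact Finset.mem_erase.2 ⟨sw_ne_a hv2a, hvme _ (hsupmem _ hps)⟩
      · exact Finset.mem_erase.2 ⟨sw_ne_a hv2a, hvme _ (hsupmem _ hqs)⟩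
    have hE3 : ∀ e ∈ C3.edges, Sym2.map (sw a v2) e ∈ G'.toSimpleGraph.edgeSet := by
      intro e he
      induction e using Sym2.ind with
      | _ p q =>
        rw [Sym2.map_pair_eq, SimpleGraph.mem_edgeSet]
        exact hG'adj (by rw [Walk.edges_cons]; exact List.mem_cons_of_mem _ he)
    have hswa : sw a v2 a = v2 := by simp [sw]
    have hswv2 : sw a v2 v2 = v2 := by simp [sw]
    have hv3a : ¬ v3 = a := fun h => hav3 h.symm
    have hswv3 : sw a v2 v3 = v3 := by simp only [sw, if_neg hv3a]
    set Q : G'.toSimpleGraph.Walk v3 v2 := (mapWalk (sw a v2) C3 hE3).copy hswv3 hswa with hQ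
    have hQsup : Q.support = C3.support.map (sw a v2) := by
      rw [hQ, Walk.support_copy, mapWalk_support]
    have hQedges : Q.edges = C3.edges.map (Sym2.map (sw a v2)) := by
      rw [hQ, Walk.edges_copy, mapWalk_edges]
    have hQlen : Q.length = C3.length := by
      rw [hQ, Walk.length_copy, mapWalk_length]
    have hadj'' : G'.toSimpleGraph.Adj v2 v3 := by
      have := hG'adj (p := v2) (q := v3) (by rw [Walk.edges_cons]; exact List.mem_cons_self)
      rwa [hswv2, hswv3] at this
    set C'' : G'.toSimpleGraph.Walk v2 v2 := Walk.cons hadj'' Q with hC''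
    have swv2_cases : ∀ z, sw a v2 z = v2 → z = a ∨ z = v2 := by
      intro z h'
      by_cases hz : z = a
      · exact Or.inl hz
      · right; simp only [sw, if_neg hz] at h'; exact h'
    have swv3_cases : ∀ z, sw a v2 z = v3 → z = v3 := by
      intro z h'
      by_cases hz : z = a
      · subst hz; simp only [sw, if_pos rfl] at h'; exact absurd h' hv2v3
      · simp only [sw, if_neg hz] at h'; exact h'
    have hC''edges : C''.edges = (Walk.cons h3e C3).edges.map (Sym2.map (sw a v2)) := by
      rw [hC'', Walk.edges_cons, Walk.edges_cons, List.map_cons, hQedges,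
        Sym2.map_pair_eq, hswv2, hswv3]
    have hC''cyc : C''.IsCycle := by
      rw [hC'', Walk.cons_isCycle_iff]
      constructor
      · rw [Walk.isPath_def, hQsup]
        refine List.Nodup.map_on ?_ hndC3
        intro x hx y hy hxy
        rcases sw_eq_cases hxy with h' | ⟨rfl, rfl⟩ | ⟨rfl, rfl⟩
        · exact h'
        · exact absurd hy hv2C3
        · exact absurd hx hv2C3
      · rw [hQedges]
        intro hmem
        rcases List.mem_map.1 hmem with ⟨e, heC3, heq⟩
        induction e using Sym2.ind with
        | _ p q =>
          rw [Sym2.map_pair_eq] at heq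
          rcases Sym2.eq_iff.1 heq with ⟨hp, hq⟩ | ⟨hp, hq⟩
          · have hq' := swv3_cases _ hq
            subst hq'
            rcases swv2_cases _ hp with rfl | rfl
            · exact key2 heC3
            · exact hv2C3 (Walk.fst_mem_support_of_mem_edges _ heC3)
          · have hp' := swv3_cases _ hp
            subst hp'
            rcases swv2_cases _ hq with rfl | rfl
            · apply key2; rw [Sym2.eq_swap]; exact heC3
            · exact hv2C3 (Walk.snd_mem_support_of_mem_edges _ heC3)
    have hspec : ∀ x y, G'.Adj x y → s(x, y) ∈ C''.edges := by
      rintro x y ⟨⟨hne, hxe, hye, p, q, hpq, hpx, hqy⟩, hx1, hy1⟩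
      have hpx' : sw a v2 p = x := hpx
      have hqy' : sw a v2 q = y := hqy
      have hx1' : x ≠ v1 := by simpa using hx1
      have hy1' : y ≠ v1 := by simpa using hy1
      have hv1a : ¬ v1 = a := fun h => hav1 h.symm
      have hswv1 : sw a v2 v1 = v1 := by simp only [sw, if_neg hv1a]
      have hm := hadj _ _ hpq
      simp only [Walk.edges_cons, List.mem_cons] at hm
      rcases hm with hm | hm | hm
      · exfalso
        rcases Sym2.eq_iff.1 hm with ⟨rfl, rfl⟩ | ⟨rfl, rfl⟩
        · exact hy1' (by rw [← hqy', hswv1])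
        · exact hx1' (by rw [← hpx', hswv1])
      · exfalso
        rcases Sym2.eq_iff.1 hm with ⟨rfl, rfl⟩ | ⟨rfl, rfl⟩
        · exact hx1' (by rw [← hpx', hswv1])
        · exact hy1' (by rw [← hqy', hswv1])
      · rw [hC''edges, ← hpx', ← hqy', ← Sym2.map_pair_eq]
        refine List.mem_map_of_mem ?_
        rw [Walk.edges_cons, List.mem_cons]
        exact hm
    have hverts' : G'.verts = C''.support.toFinset := by
      have hCsup : C''.support = v2 :: C3.support.map (sw a v2) := by
        rw [hC'', Walk.support_cons, hQsup]
      show (G.verts.erase a) \ {v1} = _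
      rw [hverts, hCsup]
      ext z
      simp only [Finset.mem_sdiff, Finset.mem_erase, Finset.mem_singleton, List.mem_toFinset,
        Walk.support_cons, List.mem_cons, List.mem_map]
      constructor
      · rintro ⟨⟨hza, hz⟩, hzv1⟩
        rcases hz with rfl | rfl | rfl | hz
        · exact absurd rfl hza
        · exact absurd rfl hzv1
        · exact Or.inl rfl
        · right; exact ⟨z, hz, by simp only [sw, if_neg hza]⟩
      · rintro (rfl | ⟨w, hw, rfl⟩)
        · exact ⟨⟨hv2a, Or.inr (Or.inr (Or.inl rfl))⟩, fun h => hv1v2 h.symm⟩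
        · by_cases hwa : w = a
          · subst hwa
            rw [hswa]
            exact ⟨⟨hv2a, Or.inr (Or.inr (Or.inl rfl))⟩, fun h => hv1v2 h.symm⟩
          · rw [show sw a v2 w = w from by simp only [sw, if_neg hwa]]
            refine ⟨⟨hwa, Or.inr (Or.inr (Or.inr hw))⟩, ?_⟩
            intro h'; subst h'; exact hv1C3 hw
    have hC''len : C''.length = n - 2 := by
      rw [hC'', Walk.length_cons, hQlen]; omega
    obtain ⟨H, hH, hHm⟩ := ih (n - 2) (by omega) G' v2 C'' ⟨hC''cyc, hverts', hspec⟩ hC''len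
      (by obtain ⟨k, hk⟩ := heven; exact ⟨k - 1, by omega⟩)
    refine ⟨H, hH, ?_⟩
    have hadm : G.AdmissibleContraction a v2 := by
      refine ⟨fun h => hv2a h.symm, v1, a,
        Walk.cons h1 (Walk.cons h2 (Walk.cons h3e C3)), h1, h2, ⟨hC, ?_, ?_⟩, ?_, ?_⟩
      · exact fun x _ y _ hxy => hadj x y hxy
      · have hvempty : (G.deleteVerts
            (Walk.cons h1 (Walk.cons h2 (Walk.cons h3e C3))).support.toFinset).verts = ∅ := by
          show G.verts \ _ = ∅
          rw [hverts, Finset.sdiff_self]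
        rw [numComponents_of_empty _ hvempty]
        exact Nat.zero_le _
      · rw [Walk.edges_cons]; exact List.mem_cons_self
      · rw [Walk.edges_cons, Walk.edges_cons]
        exact List.mem_cons_of_mem _ (List.mem_cons_self)
    exact (hHm.tail (MinorStep.deleteVert (G.contract a v2) v1)).tail
      (MinorStep.contract G a v2 hadm)

end NatGraph

/-- A bipartite graph `G` is a forest (contains no cycle) if and only if
`G` does not contain `K₂,₂` as a bipartite minor. -/
theorem bipartite_forest (G : NatGraph) (hG : G.IsBipartite) :
    G.toSimpleGraph.IsAcyclic ↔
      ¬ ∃ H : NatGraph, H.IsCompleteBipartiteOn 2 2 ∧ H.IsBipMinorOf G := by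
  constructor
  · rintro hac ⟨H, hK, hM⟩
    exact NatGraph.k22_cycle hK (NatGraph.minor_acyclic hM hac)
  · intro hno v c hc
    obtain ⟨col, hcol⟩ := hG
    have heven : Even c.length := (NatGraph.walk_even_iff hcol c).2 rfl
    obtain ⟨G₁, C₁, hc1, hv1, hl1, hm1⟩ := NatGraph.phase1 G c hc
    obtain ⟨G₂, C₂, hp2, hl2, hm2⟩ := NatGraph.phase2
      ((G₁.verts ×ˢ G₁.verts).image (fun p => s(p.1, p.2))) G₁ v C₁ hc1 hv1
      (fun x y hxy => Or.inr (Finset.mem_image.2 ⟨(x, y),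
        Finset.mem_product.2 ⟨(G₁.mem_of_adj hxy).1, (G₁.mem_of_adj hxy).2⟩, rfl⟩))
    obtain ⟨H, hH, hHm⟩ := NatGraph.phase3 C₂.length G₂ v C₂ hp2 rfl
      (by rw [hl2, hl1]; exact heven)
    exact hno ⟨H, hH, hHm.trans (hm2.trans hm1)⟩
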